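/- arXiv:2604.07519 — 4 statements merged into one kernel-verified Lean document; each statement's English description precedes it below -/
import Mathlib

section
/- The semigroup Cone(h1,...,h8) ∩ Z^5 is generated as a monoid by the nine elements h1,...,h8,h9, where h9=(1,1,0,1,-1). -/
open Matrix BigOperators

/-- The nine lattice vectors h1,...,h9 in ℤ^5 (indexed 0,...,8). -/
def hv : Fin 9 → Fin 5 → ℤ :=
  ![![1,0,0,0,0], ![0,1,0,0,0], ![0,0,1,0,0], ![0,0,0,1,0], ![0,0,0,0,1],
    ![2,2,-1,1,-2], ![1,2,-1,1,-1], ![1,2,0,0,-1], ![1,1,0,1,-1]]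

/-- Coordinatewise cast of an integer vector to a real vector. -/
def toR (u : Fin 5 → ℤ) : Fin 5 → ℝ := fun i => (u i : ℝ)

/-- The cone of nonnegative real combinations of a finite family of vectors in ℝ^5. -/
def coneOf {k : ℕ} (v : Fin k → Fin 5 → ℝ) : Set (Fin 5 → ℝ) :=
  {x | ∃ c : Fin k → ℝ, (∀ i, 0 ≤ c i) ∧ x = ∑ i, c i • v i}

/-- The cone ω generated by h1,...,h8 in ℝ^5. -/
def ω : Set (Fin 5 → ℝ) := coneOf (fun i : Fin 8 => toR (hv i.castSucc))

lemma hmem (i : Fin 9) : hv i ∈ AddSubmonoid.closure (Set.range hv) :=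
  AddSubmonoid.subset_closure ⟨i, rfl⟩

lemma base (a b c d e : ℤ) (ha : 0 ≤ a) (hb : 0 ≤ b) (hc : 0 ≤ c) (hd : 0 ≤ d) (he : 0 ≤ e) :
    ![a,b,c,d,e] ∈ AddSubmonoid.closure (Set.range hv) := by
  have h : ![a,b,c,d,e] = a.toNat • hv 0 + b.toNat • hv 1 + c.toNat • hv 2 + d.toNat • hv 3 + e.toNat • hv 4 := by
    funext i
    fin_cases i <;> simp [hv] <;> omega
  rw [h]
  exact add_mem (add_mem (add_mem (add_mem (AddSubmonoid.nsmul_mem _ (hmem 0) _)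
    (AddSubmonoid.nsmul_mem _ (hmem 1) _)) (AddSubmonoid.nsmul_mem _ (hmem 2) _))
    (AddSubmonoid.nsmul_mem _ (hmem 3) _)) (AddSubmonoid.nsmul_mem _ (hmem 4) _)

lemma split (a b c d e a' b' c' d' e' : ℤ) (k : Fin 9)
    (h : ![a,b,c,d,e] = ![a',b',c',d',e'] + hv k)
    (h' : ![a',b',c',d',e'] ∈ AddSubmonoid.closure (Set.range hv)) :
    ![a,b,c,d,e] ∈ AddSubmonoid.closure (Set.range hv) := by
  rw [h]; exact add_mem h' (hmem k)

lemma key6 (x y z w v : ℤ) : ![x,y,z,w,v] = ![x-2,y-2,z+1,w-1,v+2] + hv 5 := by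
  have h5 : hv 5 = ![2,2,-1,1,-2] := rfl
  rw [h5]; funext i; fin_cases i <;> simp <;> ring

lemma key7 (x y z w v : ℤ) : ![x,y,z,w,v] = ![x-1,y-2,z+1,w-1,v+1] + hv 6 := by
  have h5 : hv 6 = ![1,2,-1,1,-1] := rfl
  rw [h5]; funext i; fin_cases i <;> simp <;> ring

lemma key8 (x y z w v : ℤ) : ![x,y,z,w,v] = ![x-1,y-2,z,w,v+1] + hv 7 := by
  have h5 : hv 7 = ![1,2,0,0,-1] := rfl
  rw [h5]; funext i; fin_cases i <;> simp <;> ring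

lemma key9 (x y z w v : ℤ) : ![x,y,z,w,v] = ![x-1,y-1,z,w-1,v+1] + hv 8 := by
  have h5 : hv 8 = ![1,1,0,1,-1] := rfl
  rw [h5]; funext i; fin_cases i <;> simp <;> ring

set_option maxHeartbeats 1000000 in
lemma key : ∀ (n : ℕ) (a b c d e : ℤ), a.toNat ≤ n →
    0 ≤ a → 0 ≤ b → 0 ≤ d → 0 ≤ c + d → 0 ≤ b + e → 0 ≤ b + 2*d + 2*e →
    0 ≤ b + 2*c → 0 ≤ a + e → 0 ≤ a + c →
    ![a,b,c,d,e] ∈ AddSubmonoid.closure (Set.range hv) := by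
  intro n
  induction n with
  | zero =>
    intro a b c d e hn ha hb hd h1 h2 h3 h4 h5 h6
    exact base a b c d e ha hb (by omega) hd (by omega)
  | succ n ih =>
    intro a b c d e hn ha hb hd h1 h2 h3 h4 h5 h6
    by_cases hce : 0 ≤ c ∧ 0 ≤ e
    · exact base a b c d e ha hb hce.1 hd hce.2
    · have hstep :
          (0 ≤ a-2 ∧ 0 ≤ b-2 ∧ 0 ≤ d-1 ∧ 0 ≤ (c+1)+(d-1) ∧ 0 ≤ (b-2)+(e+2) ∧
             0 ≤ (b-2)+2*(d-1)+2*(e+2) ∧ 0 ≤ (b-2)+2*(c+1) ∧ 0 ≤ (a-2)+(e+2) ∧ 0 ≤ (a-2)+(c+1)) ∨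
          (0 ≤ a-1 ∧ 0 ≤ b-2 ∧ 0 ≤ d-1 ∧ 0 ≤ (c+1)+(d-1) ∧ 0 ≤ (b-2)+(e+1) ∧
             0 ≤ (b-2)+2*(d-1)+2*(e+1) ∧ 0 ≤ (b-2)+2*(c+1) ∧ 0 ≤ (a-1)+(e+1) ∧ 0 ≤ (a-1)+(c+1)) ∨
          (0 ≤ a-1 ∧ 0 ≤ b-2 ∧ 0 ≤ d ∧ 0 ≤ c+d ∧ 0 ≤ (b-2)+(e+1) ∧
             0 ≤ (b-2)+2*d+2*(e+1) ∧ 0 ≤ (b-2)+2*c ∧ 0 ≤ (a-1)+(e+1) ∧ 0 ≤ (a-1)+c) ∨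
          (0 ≤ a-1 ∧ 0 ≤ b-1 ∧ 0 ≤ d-1 ∧ 0 ≤ c+(d-1) ∧ 0 ≤ (b-1)+(e+1) ∧
             0 ≤ (b-1)+2*(d-1)+2*(e+1) ∧ 0 ≤ (b-1)+2*c ∧ 0 ≤ (a-1)+(e+1) ∧ 0 ≤ (a-1)+c) := by
        omega
      rcases hstep with ⟨q1,q2,q3,q4,q5,q6,q7,q8,q9⟩ | ⟨q1,q2,q3,q4,q5,q6,q7,q8,q9⟩ |
        ⟨q1,q2,q3,q4,q5,q6,q7,q8,q9⟩ | ⟨q1,q2,q3,q4,q5,q6,q7,q8,q9⟩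
      · exact split _ _ _ _ _ _ _ _ _ _ 5 (key6 a b c d e)
          (ih _ _ _ _ _ (by omega) q1 q2 q3 q4 q5 q6 q7 q8 q9)
      · exact split _ _ _ _ _ _ _ _ _ _ 6 (key7 a b c d e)
          (ih _ _ _ _ _ (by omega) q1 q2 q3 q4 q5 q6 q7 q8 q9)
      · exact split _ _ _ _ _ _ _ _ _ _ 7 (key8 a b c d e)
          (ih _ _ _ _ _ (by omega) q1 q2 q3 q4 q5 q6 q7 q8 q9)
      · exact split _ _ _ _ _ _ _ _ _ _ 8 (key9 a b c d e)
          (ih _ _ _ _ _ (by omega) q1 q2 q3 q4 q5 q6 q7 q8 q9)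

lemma single_sum {k : ℕ} (i : Fin k) (c : ℝ) (v : Fin k → Fin 5 → ℝ) :
    ∑ j, (if j = i then c else 0) • v j = c • v i := by
  rw [Finset.sum_eq_single i]
  · simp
  · intro b _ hb; simp [hb]
  · simp

lemma gen_mem (i : Fin 8) : toR (hv i.castSucc) ∈ ω :=
  ⟨fun j => if j = i then 1 else 0,
   fun j => by dsimp only; split <;> norm_num,
   by rw [single_sum]; simp⟩

lemma h9_mem : toR (hv 8) ∈ ω := by
  refine ⟨fun j => (if j = 2 then 1/2 else 0) + (if j = 3 then 1/2 else 0) + (if j = 5 then 1/2 else 0),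
    fun j => by dsimp only; apply add_nonneg; apply add_nonneg; all_goals split <;> norm_num, ?_⟩
  simp only [add_smul, Finset.sum_add_distrib, single_sum]
  have e8 : hv 8 = ![1,1,0,1,-1] := rfl
  have e2 : hv (Fin.castSucc 2) = ![0,0,1,0,0] := rfl
  have e3 : hv (Fin.castSucc 3) = ![0,0,0,1,0] := rfl
  have e5 : hv (Fin.castSucc 5) = ![2,2,-1,1,-2] := rfl
  rw [e8, e2, e3, e5]
  funext j
  fin_cases j <;> norm_num [toR]

lemma all_mem (i : Fin 9) : toR (hv i) ∈ ω := by
  induction i using Fin.lastCases with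
  | last => exact h9_mem
  | cast i => exact gen_mem i

lemma omega_zero : (0 : Fin 5 → ℝ) ∈ ω :=
  ⟨0, fun i => le_refl 0, by simp⟩

lemma omega_add {x y : Fin 5 → ℝ} (hx : x ∈ ω) (hy : y ∈ ω) : x + y ∈ ω := by
  obtain ⟨c1, hc1, e1⟩ := hx
  obtain ⟨c2, hc2, e2⟩ := hy
  exact ⟨c1 + c2, fun i => add_nonneg (hc1 i) (hc2 i),
    by rw [e1, e2, ← Finset.sum_add_distrib]; simp [add_smul]⟩

lemma toR_add (x y : Fin 5 → ℤ) : toR (x + y) = toR x + toR y := by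
  funext i; simp [toR]

lemma toR_zero : toR 0 = 0 := by funext i; simp [toR]

lemma easy_dir {u : Fin 5 → ℤ} (hu : u ∈ AddSubmonoid.closure (Set.range hv)) : toR u ∈ ω := by
  induction hu using AddSubmonoid.closure_induction with
  | mem x hx => obtain ⟨i, rfl⟩ := hx; exact all_mem i
  | zero => rw [toR_zero]; exact omega_zero
  | add x y _ _ hx hy => rw [toR_add]; exact omega_add hx hy

lemma hard_dir {u : Fin 5 → ℤ} (h : toR u ∈ ω) :
    u ∈ AddSubmonoid.closure (Set.range hv) := by
  obtain ⟨c, hc, hx⟩ := h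
  have r0 : hv (Fin.castSucc (0:Fin 8)) = ![1,0,0,0,0] := rfl
  have r1 : hv (Fin.castSucc (1:Fin 8)) = ![0,1,0,0,0] := rfl
  have r2 : hv (Fin.castSucc (2:Fin 8)) = ![0,0,1,0,0] := rfl
  have r3 : hv (Fin.castSucc (3:Fin 8)) = ![0,0,0,1,0] := rfl
  have r4 : hv (Fin.castSucc (4:Fin 8)) = ![0,0,0,0,1] := rfl
  have r5 : hv (Fin.castSucc (5:Fin 8)) = ![2,2,-1,1,-2] := rfl
  have r6 : hv (Fin.castSucc (6:Fin 8)) = ![1,2,-1,1,-1] := rfl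
  have r7 : hv (Fin.castSucc (7:Fin 8)) = ![1,2,0,0,-1] := rfl
  have q0 : hv 0 = ![1,0,0,0,0] := rfl
  have q1 : hv 1 = ![0,1,0,0,0] := rfl
  have E0 := congrFun hx 0
  have E1 := congrFun hx 1
  have E2 := congrFun hx 2
  have E3 := congrFun hx 3
  have E4 := congrFun hx 4
  simp [toR, Fin.sum_univ_eight, hv, r0, r1, r2, r3, r4, r5, r6, r7, q0, q1] at E0 E1 E2 E3 E4
  have c0 := hc 0; have c1 := hc 1; have c2 := hc 2; have c3 := hc 3
  have c4 := hc 4; have c5 := hc 5; have c6 := hc 6; have c7 := hc 7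
  have I1 : 0 ≤ u 0 := by
    have : (0:ℝ) ≤ ((u 0 : ℤ) : ℝ) := by rw [E0]; linarith
    exact_mod_cast this
  have I2 : 0 ≤ u 1 := by
    have : (0:ℝ) ≤ ((u 1 : ℤ) : ℝ) := by rw [E1]; linarith
    exact_mod_cast this
  have I3 : 0 ≤ u 3 := by
    have : (0:ℝ) ≤ ((u 3 : ℤ) : ℝ) := by rw [E3]; linarith
    exact_mod_cast this
  have I4 : 0 ≤ u 2 + u 3 := by
    have : (0:ℝ) ≤ ((u 2 + u 3 : ℤ) : ℝ) := by push_cast; linarith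
    exact_mod_cast this
  have I5 : 0 ≤ u 1 + u 4 := by
    have : (0:ℝ) ≤ ((u 1 + u 4 : ℤ) : ℝ) := by push_cast; linarith
    exact_mod_cast this
  have I6 : 0 ≤ u 1 + 2*(u 3) + 2*(u 4) := by
    have : (0:ℝ) ≤ ((u 1 + 2*(u 3) + 2*(u 4) : ℤ) : ℝ) := by push_cast; linarith
    exact_mod_cast this
  have I7 : 0 ≤ u 1 + 2*(u 2) := by
    have : (0:ℝ) ≤ ((u 1 + 2*(u 2) : ℤ) : ℝ) := by push_cast; linarith
    exact_mod_cast this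
  have I8 : 0 ≤ u 0 + u 4 := by
    have : (0:ℝ) ≤ ((u 0 + u 4 : ℤ) : ℝ) := by push_cast; linarith
    exact_mod_cast this
  have I9 : 0 ≤ u 0 + u 2 := by
    have : (0:ℝ) ≤ ((u 0 + u 2 : ℤ) : ℝ) := by push_cast; linarith
    exact_mod_cast this
  have hu : u = ![u 0, u 1, u 2, u 3, u 4] := by
    funext i; fin_cases i <;> rfl
  rw [hu]
  exact key (u 0).toNat (u 0) (u 1) (u 2) (u 3) (u 4) le_rfl I1 I2 I3 I4 I5 I6 I7 I8 I9

/-- The semigroup ω ∩ ℤ^5 is generated as a monoid by h1,...,h9. -/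
theorem stmt_6 :
    {u : Fin 5 → ℤ | toR u ∈ ω} = ↑(AddSubmonoid.closure (Set.range hv)) := by
  ext u
  simp only [Set.mem_setOf_eq, SetLike.mem_coe]
  exact ⟨hard_dir, easy_dir⟩
end

section
/- The vector h9=(1,1,0,1,-1) cannot be written as a sum u+v of two nonzero elements u,v of the semigroup S = Cone(h1,...,h8) ∩ Z^5; that is, h9 is an irreducible (Hilbert basis) element of S. -/
open Matrix BigOperators

/-- A linear functional nonnegative on all generators is nonnegative on the cone. -/
lemma key_s7 (w : Fin 5 → ℝ)
    (hw : ∀ i : Fin 8, 0 ≤ ∑ j, toR (hv i.castSucc) j * w j)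
    {x : Fin 5 → ℝ} (hx : x ∈ ω) : 0 ≤ ∑ j, x j * w j := by
  obtain ⟨c, hc, rfl⟩ := hx
  have : ∑ j, (∑ i : Fin 8, c i • toR (hv i.castSucc)) j * w j
      = ∑ i : Fin 8, c i * ∑ j, toR (hv i.castSucc) j * w j := by
    simp only [Finset.sum_apply, Pi.smul_apply, smul_eq_mul, Finset.sum_mul, mul_assoc,
      Finset.mul_sum]
    rw [Finset.sum_comm]
  rw [this]
  exact Finset.sum_nonneg fun i _ => mul_nonneg (hc i) (hw i)

/-- Integer version for a specific integer functional. -/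
lemma keyZ (w : Fin 5 → ℤ)
    (hw : ∀ i : Fin 8, 0 ≤ ∑ j, toR (hv i.castSucc) j * (w j : ℝ))
    {u : Fin 5 → ℤ} (hu : toR u ∈ ω) : 0 ≤ ∑ j, u j * w j := by
  have := key_s7 (fun j => (w j : ℝ)) hw hu
  have h2 : ((∑ j, u j * w j : ℤ) : ℝ) = ∑ j, toR u j * (w j : ℝ) := by
    push_cast [toR]; rfl
  exact_mod_cast h2 ▸ this

/-- h9 is irreducible in S = ω ∩ ℤ^5: it is not a sum of two nonzero elements of S. -/
theorem stmt_7 :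
    ¬ ∃ u v : Fin 5 → ℤ, toR u ∈ ω ∧ toR v ∈ ω ∧ u ≠ 0 ∧ v ≠ 0 ∧ hv 8 = u + v := by
  rintro ⟨u, v, hu, hv', hu0, hv0, heq⟩
  have facets : ∀ w : Fin 5 → ℤ,
      (∀ i : Fin 8, 0 ≤ ∑ j, (hv i.castSucc j : ℝ) * (w j : ℝ)) →
      0 ≤ ∑ j, u j * w j ∧ 0 ≤ ∑ j, v j * w j := by
    intro w hw
    exact ⟨keyZ w hw hu, keyZ w hw hv'⟩
  have check : ∀ w : Fin 5 → ℤ, (∀ i : Fin 8, 0 ≤ ∑ j, (hv i.castSucc j : ℤ) * w j) →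
      (∀ i : Fin 8, 0 ≤ ∑ j, (hv i.castSucc j : ℝ) * (w j : ℝ)) := by
    intro w hwz i
    have := hwz i
    have h2 : ((∑ j, hv i.castSucc j * w j : ℤ) : ℝ)
        = ∑ j, (hv i.castSucc j : ℝ) * (w j : ℝ) := by push_cast; rfl
    exact_mod_cast h2 ▸ (Int.cast_nonneg_iff.mpr this : (0:ℝ) ≤ _)
  have L1 := facets ![1,0,0,0,0] (check _ (by decide))
  have L2 := facets ![0,1,0,0,0] (check _ (by decide))
  have L3 := facets ![0,0,0,1,0] (check _ (by decide))
  have L4 := facets ![1,0,0,0,1] (check _ (by decide))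
  have L5 := facets ![0,1,0,0,1] (check _ (by decide))
  have L6 := facets ![0,1,2,0,0] (check _ (by decide))
  have L7 := facets ![0,1,0,2,2] (check _ (by decide))
  have L8 := facets ![1,0,1,0,0] (check _ (by decide))
  have L9 := facets ![0,0,1,1,0] (check _ (by decide))
  simp only [Fin.sum_univ_five, Matrix.cons_val_zero, Matrix.cons_val_one, Matrix.head_cons,
    Matrix.cons_val_two, Matrix.tail_cons, Matrix.cons_val_three, Matrix.cons_val_four,
    mul_one, mul_zero, mul_neg, add_zero, zero_add, mul_comm] at L1 L2 L3 L4 L5 L6 L7 L8 L9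
  have e0 : (1:ℤ) = u 0 + v 0 := congrFun heq 0
  have e1 : (1:ℤ) = u 1 + v 1 := congrFun heq 1
  have e2 : (0:ℤ) = u 2 + v 2 := congrFun heq 2
  have e3 : (1:ℤ) = u 3 + v 3 := congrFun heq 3
  have e4 : (-1:ℤ) = u 4 + v 4 := congrFun heq 4
  have hu0' : u 0 ≠ 0 ∨ u 1 ≠ 0 ∨ u 2 ≠ 0 ∨ u 3 ≠ 0 ∨ u 4 ≠ 0 := by
    by_contra h
    push_neg at h
    apply hu0
    funext i
    fin_cases i <;> simp [h.1, h.2.1, h.2.2.1, h.2.2.2.1, h.2.2.2.2]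
  have hv0' : v 0 ≠ 0 ∨ v 1 ≠ 0 ∨ v 2 ≠ 0 ∨ v 3 ≠ 0 ∨ v 4 ≠ 0 := by
    by_contra h
    push_neg at h
    apply hv0
    funext i
    fin_cases i <;> simp [h.1, h.2.1, h.2.2.1, h.2.2.2.1, h.2.2.2.2]
  obtain ⟨a1, a2⟩ := L1; obtain ⟨b1, b2⟩ := L2; obtain ⟨c1, c2⟩ := L3
  obtain ⟨d1, d2⟩ := L4; obtain ⟨f1, f2⟩ := L5; obtain ⟨g1, g2⟩ := L6
  obtain ⟨i1, i2⟩ := L7; obtain ⟨j1, j2⟩ := L8; obtain ⟨k1, k2⟩ := L9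
  omega
end

section
/- The only elements u of the semigroup S = Cone(h1,...,h8) ∩ Z^5 whose coordinate sum equals 1 are the five standard basis vectors h1,...,h5. -/
open Matrix BigOperators

/-- The eight generators, re-indexed by `Fin 8`. -/
def g : Fin 8 → Fin 5 → ℤ :=
  ![![1,0,0,0,0], ![0,1,0,0,0], ![0,0,1,0,0], ![0,0,0,1,0], ![0,0,0,0,1],
    ![2,2,-1,1,-2], ![1,2,-1,1,-1], ![1,2,0,0,-1]]

lemma hg : ∀ i : Fin 8, hv i.castSucc = g i := by decide

/-- The only elements of S = ω ∩ ℤ^5 with coordinate sum 1 are h1,...,h5. -/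
theorem stmt_8 :
    ∀ u : Fin 5 → ℤ, toR u ∈ ω → ∑ i, u i = 1 →
      ∃ i : Fin 9, (i : ℕ) < 5 ∧ u = hv i := by
  intro u hmem hsum
  obtain ⟨c, hc, hx⟩ := hmem
  simp only [hg] at hx
  have e : ∀ j, (u j : ℝ) = ∑ x : Fin 8, c x * (g x j : ℝ) := by
    intro j
    have h := congrFun hx j
    simpa [toR, Finset.sum_apply] using h
  have e0 := e 0
  have e1 := e 1
  have e2 := e 2
  have e3 := e 3
  have e4 := e 4
  simp only [Fin.sum_univ_eight, (show g 0 0 = 1 from by decide), (show g 0 1 = 0 from by decide), (show g 0 2 = 0 from by decide), (show g 0 3 = 0 from by decide), (show g 0 4 = 0 from by decide), (show g 1 0 = 0 from by decide), (show g 1 1 = 1 from by decide), (show g 1 2 = 0 from by decide), (show g 1 3 = 0 from by decide), (show g 1 4 = 0 from by decide), (show g 2 0 = 0 from by decide), (show g 2 1 = 0 from by decide), (show g 2 2 = 1 from by decide), (show g 2 3 = 0 from by decide), (show g 2 4 = 0 from by decide), (show g 3 0 = 0 from by decide), (show g 3 1 = 0 from by decide), (show g 3 2 = 0 from by decide), (show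 g 3 3 = 1 from by decide), (show g 3 4 = 0 from by decide), (show g 4 0 = 0 from by decide), (show g 4 1 = 0 from by decide), (show g 4 2 = 0 from by decide), (show g 4 3 = 0 from by decide), (show g 4 4 = 1 from by decide), (show g 5 0 = 2 from by decide), (show g 5 1 = 2 from by decide), (show g 5 2 = -1 from by decide), (show g 5 3 = 1 from by decide), (show g 5 4 = -2 from by decide), (show g 6 0 = 1 from by decide), (show g 6 1 = 2 from by decide), (show g 6 2 = -1 from by decide), (show g 6 3 = 1 from by decide), (show g 6 4 = -1 from by decide), (show g 7 0 = 1 from by decide), (show g 7 1 = 2 from by decide), (show g 7 2 = 0 from by decide), (show g 7 3 = 0 from by decide), (show g 7 4 = -1 from by decide)] at e0 e1 e2 e3 e4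
  push_cast at e0 e1 e2 e3 e4
  have hc0 := hc 0
  have hc1 := hc 1
  have hc2 := hc 2
  have hc3 := hc 3
  have hc4 := hc 4
  have hc5 := hc 5
  have hc6 := hc 6
  have hc7 := hc 7
  rw [Fin.sum_univ_five] at hsum
  have hsR : (u 0 : ℝ) + u 1 + u 2 + u 3 + u 4 = 1 := by exact_mod_cast congrArg (Int.cast : ℤ → ℝ) hsum
  -- bounds
  have b0l : (0:ℝ) ≤ u 0 := by linarith
  have b0u : (u 0:ℝ) ≤ 1 := by linarith
  have b1l : (0:ℝ) ≤ u 1 := by linarith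
  have b1u : (u 1:ℝ) ≤ 1 := by linarith
  have b2l : (-1:ℝ) ≤ 2 * u 2 := by linarith
  have b2u : (u 2:ℝ) ≤ 1 := by linarith
  have b3l : (0:ℝ) ≤ u 3 := by linarith
  have b3u : (u 3:ℝ) ≤ 1 := by linarith
  have b4u : (u 4:ℝ) ≤ 1 := by linarith
  have i0l : (0:ℤ) ≤ u 0 := by exact_mod_cast b0l
  have i0u : u 0 ≤ 1 := by exact_mod_cast b0u
  have i1l : (0:ℤ) ≤ u 1 := by exact_mod_cast b1l
  have i1u : u 1 ≤ 1 := by exact_mod_cast b1u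
  have i2l : (-1:ℤ) ≤ 2 * u 2 := by exact_mod_cast b2l
  have i2u : u 2 ≤ 1 := by exact_mod_cast b2u
  have i3l : (0:ℤ) ≤ u 3 := by exact_mod_cast b3l
  have i3u : u 3 ≤ 1 := by exact_mod_cast b3u
  have i4u : u 4 ≤ 1 := by exact_mod_cast b4u
  have i4l : (0:ℤ) ≤ u 4 := by
    by_contra hneg
    push_neg at hneg
    have hneg' : u 4 ≤ -1 := by omega
    have hR : (u 4:ℝ) ≤ -1 := by exact_mod_cast hneg'
    have hpar : (2:ℝ) * u 3 = 1 := by linarith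
    have : (2:ℤ) * u 3 = 1 := by exact_mod_cast hpar
    omega
  have key : (u 0 = 1 ∧ u 1 = 0 ∧ u 2 = 0 ∧ u 3 = 0 ∧ u 4 = 0) ∨
      (u 0 = 0 ∧ u 1 = 1 ∧ u 2 = 0 ∧ u 3 = 0 ∧ u 4 = 0) ∨
      (u 0 = 0 ∧ u 1 = 0 ∧ u 2 = 1 ∧ u 3 = 0 ∧ u 4 = 0) ∨
      (u 0 = 0 ∧ u 1 = 0 ∧ u 2 = 0 ∧ u 3 = 1 ∧ u 4 = 0) ∨
      (u 0 = 0 ∧ u 1 = 0 ∧ u 2 = 0 ∧ u 3 = 0 ∧ u 4 = 1) := by omega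
  rcases key with ⟨p0,p1,p2,p3,p4⟩|⟨p0,p1,p2,p3,p4⟩|⟨p0,p1,p2,p3,p4⟩|⟨p0,p1,p2,p3,p4⟩|⟨p0,p1,p2,p3,p4⟩
  · exact ⟨0, by decide, by funext j; fin_cases j <;> simp [hv] <;> omega⟩
  · exact ⟨1, by decide, by funext j; fin_cases j <;> simp [hv] <;> omega⟩
  · exact ⟨2, by decide, by funext j; fin_cases j <;> simp [hv] <;> omega⟩
  · exact ⟨3, by decide, by funext j; fin_cases j <;> simp [hv] <;> omega⟩
  · exact ⟨4, by decide, by funext j; fin_cases j <;> simp [hv] <;> omega⟩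
end

section
/- Let H = {h1, h3-h2, h9-h2, h3-h4, h9-h4, h3-h5, h7-h5, h3-h6, h7-h6} ⊂ Z^5 and let R be the additive submonoid of Z^5 generated by H. Then h2, h4, h5, h6, h3, h7, h8, h9 all belong to R; explicitly h2=(h7-h6)+(h9-h4), h4=(h7-h6)+(h9-h2), h5=(h7-h6)+h1, h6=(h7-h5)+h1, h3=(h3-h5)+h5, h7=(h7-h5)+h5, h8=(h8-h1)+h1 with h8-h1=(h7-h1)+(h3-h4) and h7-h1=(h7-h5)+(h7-h6), and h9=(h9-h1)+h1 with h9-h1=(h7-h1)+(h3-h2). -/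
open Matrix BigOperators

/-- The generating set H = {h1, h3-h2, h9-h2, h3-h4, h9-h4, h3-h5, h7-h5, h3-h6, h7-h6}. -/
def Hset : Set (Fin 5 → ℤ) :=
  {hv 0, hv 2 - hv 1, hv 8 - hv 1, hv 2 - hv 3, hv 8 - hv 3,
   hv 2 - hv 4, hv 6 - hv 4, hv 2 - hv 5, hv 6 - hv 5}

/-- All of h1,...,h9 belong to the submonoid R of ℤ^5 generated by H. -/
theorem stmt_12 : ∀ i : Fin 9, hv i ∈ AddSubmonoid.closure Hset := by
  have g1 : hv 0 ∈ AddSubmonoid.closure Hset :=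
    AddSubmonoid.subset_closure (by simp [Hset])
  have g2 : hv 2 - hv 1 ∈ AddSubmonoid.closure Hset :=
    AddSubmonoid.subset_closure (by simp [Hset])
  have g3 : hv 8 - hv 1 ∈ AddSubmonoid.closure Hset :=
    AddSubmonoid.subset_closure (by simp [Hset])
  have g4 : hv 2 - hv 3 ∈ AddSubmonoid.closure Hset :=
    AddSubmonoid.subset_closure (by simp [Hset])
  have g5 : hv 8 - hv 3 ∈ AddSubmonoid.closure Hset :=
    AddSubmonoid.subset_closure (by simp [Hset])
  have g6 : hv 2 - hv 4 ∈ AddSubmonoid.closure Hset :=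
    AddSubmonoid.subset_closure (by simp [Hset])
  have g7 : hv 6 - hv 4 ∈ AddSubmonoid.closure Hset :=
    AddSubmonoid.subset_closure (by simp [Hset])
  have g9 : hv 6 - hv 5 ∈ AddSubmonoid.closure Hset :=
    AddSubmonoid.subset_closure (by simp [Hset])
  intro i
  fin_cases i
  · exact g1
  · show hv 1 ∈ AddSubmonoid.closure Hset
    have e : hv 1 = (hv 6 - hv 5) + (hv 8 - hv 3) := by decide
    rw [e]; exact AddSubmonoid.add_mem _ g9 g5
  · show hv 2 ∈ AddSubmonoid.closure Hset
    have e : hv 2 = (hv 2 - hv 4) + ((hv 6 - hv 5) + hv 0) := by decide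
    rw [e]; exact AddSubmonoid.add_mem _ g6 (AddSubmonoid.add_mem _ g9 g1)
  · show hv 3 ∈ AddSubmonoid.closure Hset
    have e : hv 3 = (hv 6 - hv 5) + (hv 8 - hv 1) := by decide
    rw [e]; exact AddSubmonoid.add_mem _ g9 g3
  · show hv 4 ∈ AddSubmonoid.closure Hset
    have e : hv 4 = (hv 6 - hv 5) + hv 0 := by decide
    rw [e]; exact AddSubmonoid.add_mem _ g9 g1
  · show hv 5 ∈ AddSubmonoid.closure Hset
    have e : hv 5 = (hv 6 - hv 4) + hv 0 := by decide
    rw [e]; exact AddSubmonoid.add_mem _ g7 g1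
  · show hv 6 ∈ AddSubmonoid.closure Hset
    have e : hv 6 = (hv 6 - hv 4) + ((hv 6 - hv 5) + hv 0) := by decide
    rw [e]; exact AddSubmonoid.add_mem _ g7 (AddSubmonoid.add_mem _ g9 g1)
  · show hv 7 ∈ AddSubmonoid.closure Hset
    have e : hv 7 = (hv 6 - hv 4) + ((hv 6 - hv 5) + ((hv 2 - hv 3) + hv 0)) := by decide
    rw [e]
    exact AddSubmonoid.add_mem _ g7 (AddSubmonoid.add_mem _ g9 (AddSubmonoid.add_mem _ g4 g1))
  · show hv 8 ∈ AddSubmonoid.closure Hset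
    have e : hv 8 = (hv 6 - hv 4) + ((hv 6 - hv 5) + ((hv 2 - hv 1) + hv 0)) := by decide
    rw [e]
    exact AddSubmonoid.add_mem _ g7 (AddSubmonoid.add_mem _ g9 (AddSubmonoid.add_mem _ g2 g1))
end
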